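/- Let φ : (0, ∞) → (0, ∞) be an increasing positive function, and for g ∈ C(𝕋) set ‖g‖_φ = ‖g‖_∞ + sup_{δ>0} ‖g − g(· + δ)‖_∞/φ(δ) (a value in [0, ∞]). Let A : C(𝕋) → C(𝕋) be a bounded linear operator that commutes with translations, i.e. A(f(· + h))(x) = A(f)(x + h) for all f ∈ C(𝕋) and h, x ∈ ℝ. Then for every f ∈ C(𝕋) and every natural number n ≥ 1, ‖A(f) − f‖_φ ≤ ‖A(f) − f‖_∞·(1 + 2/φ(1/n)) + sup_{0<δ≤1/n} (2·ω(f, δ)/φ(δ))·(1 + ‖A‖), where ‖A‖ is the operator norm of A. -/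

import Mathlib

instance : Fact (0 < 2 * Real.pi) := ⟨by positivity⟩

/-- Translation by `h` on continuous functions on the circle `ℝ/2πℤ`:
`(trC h g)(x) = g(x + h)`. -/
noncomputable def trC (h : ℝ) (g : C(AddCircle (2 * Real.pi), ℂ)) :
    C(AddCircle (2 * Real.pi), ℂ) :=
  g.comp ⟨fun x => x + (h : AddCircle (2 * Real.pi)), by continuity⟩

/-- The modulus of continuity `ω(f, δ)` of a continuous `2π`-periodic function. -/
noncomputable def modCont (f : C(AddCircle (2 * Real.pi), ℂ)) (δ : ℝ) : ℝ :=
  ⨆ p : {p : ℝ × ℝ // |p.1 - p.2| ≤ δ},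
    ‖f ((p.1.1 : ℝ) : AddCircle (2 * Real.pi)) -
      f ((p.1.2 : ℝ) : AddCircle (2 * Real.pi))‖

lemma trC_apply (h : ℝ) (g : C(AddCircle (2 * Real.pi), ℂ)) (x : AddCircle (2 * Real.pi)) :
    trC h g x = g (x + (h : AddCircle (2 * Real.pi))) := rfl

lemma trC_norm_le (h : ℝ) (g : C(AddCircle (2 * Real.pi), ℂ)) : ‖trC h g‖ ≤ ‖g‖ :=
  (ContinuousMap.norm_le _ (norm_nonneg g)).mpr fun x => g.norm_coe_le_norm _

lemma trC_sub (h : ℝ) (a b : C(AddCircle (2 * Real.pi), ℂ)) :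
    trC h (a - b) = trC h a - trC h b := by
  ext x; simp [trC_apply]

lemma modCont_bdd (f : C(AddCircle (2 * Real.pi), ℂ)) (δ : ℝ) :
    BddAbove (Set.range fun p : {p : ℝ × ℝ // |p.1 - p.2| ≤ δ} =>
      ‖f ((p.1.1 : ℝ) : AddCircle (2 * Real.pi)) -
        f ((p.1.2 : ℝ) : AddCircle (2 * Real.pi))‖) := by
  refine ⟨2 * ‖f‖, ?_⟩
  rintro x ⟨p, rfl⟩
  calc ‖f ((p.1.1 : ℝ) : AddCircle (2 * Real.pi)) -
        f ((p.1.2 : ℝ) : AddCircle (2 * Real.pi))‖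
      ≤ ‖f ((p.1.1 : ℝ) : AddCircle (2 * Real.pi))‖ +
        ‖f ((p.1.2 : ℝ) : AddCircle (2 * Real.pi))‖ := by
        exact norm_sub_le _ _
    _ ≤ ‖f‖ + ‖f‖ := add_le_add (f.norm_coe_le_norm _) (f.norm_coe_le_norm _)
    _ = 2 * ‖f‖ := by ring

lemma abs_sub_le_modCont (f : C(AddCircle (2 * Real.pi), ℂ)) {δ s t : ℝ}
    (hst : |s - t| ≤ δ) :
    ‖f ((s : ℝ) : AddCircle (2 * Real.pi)) -
      f ((t : ℝ) : AddCircle (2 * Real.pi))‖ ≤ modCont f δ :=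
  le_ciSup (modCont_bdd f δ) (⟨(s, t), hst⟩ : {p : ℝ × ℝ // |p.1 - p.2| ≤ δ})

lemma modCont_nonneg (f : C(AddCircle (2 * Real.pi), ℂ)) {δ : ℝ} (hδ : 0 ≤ δ) :
    0 ≤ modCont f δ :=
  le_trans (norm_nonneg _)
    (abs_sub_le_modCont f (s := 0) (t := 0) (by simpa using hδ))

lemma norm_sub_trC_le_modCont (f : C(AddCircle (2 * Real.pi), ℂ)) {δ : ℝ} (hδ : 0 < δ) :
    ‖f - trC δ f‖ ≤ modCont f δ := by
  refine (ContinuousMap.norm_le _ (modCont_nonneg f hδ.le)).mpr fun x => ?_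
  obtain ⟨t, rfl⟩ := QuotientAddGroup.mk_surjective x
  have hcoe : ((t : ℝ) : AddCircle (2 * Real.pi)) + ((δ : ℝ) : AddCircle (2 * Real.pi))
      = ((t + δ : ℝ) : AddCircle (2 * Real.pi)) := by
    norm_cast
  have : (f - trC δ f) ((t : ℝ) : AddCircle (2 * Real.pi)) =
      f ((t : ℝ) : AddCircle (2 * Real.pi)) - f ((t + δ : ℝ) : AddCircle (2 * Real.pi)) := by
    rw [ContinuousMap.sub_apply, trC_apply, hcoe]
  rw [this]
  exact abs_sub_le_modCont f (by rw [show t - (t + δ) = -δ by ring, abs_neg, abs_of_pos hδ])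

/-- Leindler–Meir–Totik. For a bounded linear operator `A`
on `C(𝕋)` commuting with translations, and an increasing positive `φ` on
`(0,∞)`:
`‖A f - f‖_φ ≤ ‖A f - f‖_∞ (1 + 2/φ(1/n)) + sup_{0<δ≤1/n} (2 ω(f,δ)/φ(δ)) (1 + ‖A‖)`. -/
theorem phi_norm_estimate_translation_invariant
    (φ : ℝ → ℝ) (hφ_pos : ∀ t : ℝ, 0 < t → 0 < φ t)
    (hφ_mono : StrictMonoOn φ (Set.Ioi (0:ℝ)))
    (A : C(AddCircle (2 * Real.pi), ℂ) →L[ℂ] C(AddCircle (2 * Real.pi), ℂ))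
    (hA_comm : ∀ (f : C(AddCircle (2 * Real.pi), ℂ)) (h : ℝ)
      (x : AddCircle (2 * Real.pi)),
        A (trC h f) x = A f (x + (h : AddCircle (2 * Real.pi))))
    (f : C(AddCircle (2 * Real.pi), ℂ)) (n : ℕ) (hn : 1 ≤ n) :
    ENNReal.ofReal ‖A f - f‖ +
      (⨆ (δ : ℝ) (_ : 0 < δ),
        ENNReal.ofReal (‖(A f - f) - trC δ (A f - f)‖ / φ δ)) ≤
    ENNReal.ofReal (‖A f - f‖ * (1 + 2 / φ (1 / (n : ℝ)))) +
      (⨆ (δ : ℝ) (_ : 0 < δ ∧ δ ≤ 1 / (n : ℝ)),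
        ENNReal.ofReal (2 * modCont f δ / φ δ)) *
        ENNReal.ofReal (1 + ‖A‖) := by
  set g := A f - f with hg
  have hn' : (0 : ℝ) < 1 / (n : ℝ) := by
    have : (0 : ℝ) < (n : ℝ) := by exact_mod_cast hn.trans_lt' (by norm_num)
    positivity
  have hφn : 0 < φ (1 / (n : ℝ)) := hφ_pos _ hn'
  -- first term of RHS dominates the first term of LHS
  have hfirst : ENNReal.ofReal ‖g‖ ≤
      ENNReal.ofReal (‖g‖ * (1 + 2 / φ (1 / (n : ℝ)))) := by
    refine ENNReal.ofReal_le_ofReal ?_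
    nlinarith [norm_nonneg g, hφn, mul_nonneg (norm_nonneg g) (le_of_lt (div_pos two_pos hφn))]
  -- key identity: g - trC δ g = A u - u  where  u = f - trC δ f
  have hkey : ∀ δ : ℝ, g - trC δ g = A (f - trC δ f) - (f - trC δ f) := by
    intro δ
    have hc : trC δ (A f) = A (trC δ f) := by
      ext x; exact (hA_comm f δ x).symm
    rw [hg, trC_sub, hc, map_sub]
    abel
  -- bound for small δ
  have hsmall : ∀ δ : ℝ, 0 < δ → ‖g - trC δ g‖ ≤ (1 + ‖A‖) * modCont f δ := by
    intro δ hδ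
    rw [hkey δ]
    set u := f - trC δ f with hu
    calc ‖A u - u‖ ≤ ‖A u‖ + ‖u‖ := norm_sub_le _ _
      _ ≤ ‖A‖ * ‖u‖ + ‖u‖ := by gcongr; exact A.le_opNorm u
      _ = (1 + ‖A‖) * ‖u‖ := by ring
      _ ≤ (1 + ‖A‖) * modCont f δ := by
          have h1 : (0:ℝ) ≤ 1 + ‖A‖ := by positivity
          exact mul_le_mul_of_nonneg_left (norm_sub_trC_le_modCont f hδ) h1
  -- rewrite LHS
  rw [ENNReal.add_iSup]
  refine iSup_le fun δ => ?_
  by_cases hδ : 0 < δ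
  · rw [iSup_pos hδ]
    by_cases hle : δ ≤ 1 / (n : ℝ)
    · -- small δ
      have hφδ : 0 < φ δ := hφ_pos δ hδ
      have hterm : ENNReal.ofReal (‖g - trC δ g‖ / φ δ) ≤
          ENNReal.ofReal (2 * modCont f δ / φ δ) * ENNReal.ofReal (1 + ‖A‖) := by
        rw [← ENNReal.ofReal_mul
          (div_nonneg (by nlinarith [modCont_nonneg f hδ.le]) hφδ.le)]
        refine ENNReal.ofReal_le_ofReal ?_
        rw [div_mul_eq_mul_div]
        refine (div_le_div_iff_of_pos_right hφδ).mpr ?_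
        calc ‖g - trC δ g‖ ≤ (1 + ‖A‖) * modCont f δ := hsmall δ hδ
          _ ≤ 2 * modCont f δ * (1 + ‖A‖) := by
              nlinarith [modCont_nonneg f hδ.le, norm_nonneg (A : _ →L[ℂ] _)]
      refine add_le_add hfirst (hterm.trans ?_)
      gcongr
      exact le_iSup_of_le δ (by rw [iSup_pos ⟨hδ, hle⟩])
    · -- large δ
      push_neg at hle
      have hφδ : φ (1 / (n : ℝ)) ≤ φ δ := (hφ_mono.monotoneOn) hn' hδ hle.le
      have hφδ' : 0 < φ δ := hφ_pos δ hδ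
      have hbound : ‖g - trC δ g‖ / φ δ ≤ 2 * ‖g‖ / φ (1 / (n : ℝ)) := by
        have h1 : ‖g - trC δ g‖ ≤ 2 * ‖g‖ := by
          calc ‖g - trC δ g‖ ≤ ‖g‖ + ‖trC δ g‖ := norm_sub_le _ _
            _ ≤ ‖g‖ + ‖g‖ := by gcongr; exact trC_norm_le δ g
            _ = 2 * ‖g‖ := by ring
        calc ‖g - trC δ g‖ / φ δ ≤ (2 * ‖g‖) / φ δ :=
              (div_le_div_iff_of_pos_right hφδ').mpr h1
          _ ≤ (2 * ‖g‖) / φ (1 / (n : ℝ)) :=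
              div_le_div_of_nonneg_left (by positivity) hφn hφδ
      calc ENNReal.ofReal ‖g‖ + ENNReal.ofReal (‖g - trC δ g‖ / φ δ)
          ≤ ENNReal.ofReal ‖g‖ + ENNReal.ofReal (2 * ‖g‖ / φ (1 / (n : ℝ))) := by
            exact add_le_add le_rfl (ENNReal.ofReal_le_ofReal hbound)
        _ = ENNReal.ofReal (‖g‖ + 2 * ‖g‖ / φ (1 / (n : ℝ))) := by
            rw [← ENNReal.ofReal_add (norm_nonneg g) (by positivity)]
        _ = ENNReal.ofReal (‖g‖ * (1 + 2 / φ (1 / (n : ℝ)))) := by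
            congr 1; field_simp
        _ ≤ _ := le_add_of_nonneg_right zero_le
  · rw [iSup_neg hδ, bot_eq_zero, add_zero]
    exact hfirst.trans (le_add_of_nonneg_right zero_le)
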